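/- arXiv:1301.4082 — 2 statements merged into one kernel-verified Lean document; each statement's English description precedes it below -/
import Mathlib

section
/- Consider a closed path on K subsystems (K ≥ 2) with local dimensions d : ZMod K → ℕ and matrices ρ_i on ℂ^{d(i+1)} ⊗ ℂ^{d(i)}, with path operator P. For unitaries V_i (i ∈ ZMod K) let P̃ be the path operator built from the transformed matrices ρ̃_i = (V_{i+1} ⊗ V_i) · ρ_i · (V_{i+1} ⊗ V_i)†. Then P and P̃ have the same characteristic polynomial; in particular tr P = tr P̃, so the trace and the eigenvalues of the path operator are local unitary invariants. -/
open Matrix Kronecker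

noncomputable section

/-- Partial transpose on the second tensor factor. -/
def PT1 {d₂ d₁ : ℕ} (M : Matrix (Fin d₂ × Fin d₁) (Fin d₂ × Fin d₁) ℂ) :
    Matrix (Fin d₂ × Fin d₁) (Fin d₂ × Fin d₁) ℂ :=
  fun p q => M (p.1, q.2) (q.1, p.2)

/-- Realignment. -/
def realign {d₂ d₁ : ℕ} (M : Matrix (Fin d₂ × Fin d₁) (Fin d₂ × Fin d₁) ℂ) :
    Matrix (Fin d₂ × Fin d₂) (Fin d₁ × Fin d₁) ℂ :=
  fun p q => M (p.1, q.1) (p.2, q.2)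

/-- Swap reindexing. -/
def swapRe {d₂ d₁ : ℕ} (ρ : Matrix (Fin d₂ × Fin d₁) (Fin d₂ × Fin d₁) ℂ) :
    Matrix (Fin d₁ × Fin d₂) (Fin d₁ × Fin d₂) ℂ :=
  fun p q => ρ (p.2, p.1) (q.2, q.1)

/-- SWAP operator. -/
def swapOp (d : ℕ) : Matrix (Fin d × Fin d) (Fin d × Fin d) ℂ :=
  fun p q => if p.1 = q.2 ∧ p.2 = q.1 then 1 else 0

/-- Transport a square-block matrix along equalities of dimensions. -/
def mcast {m n m' n' : ℕ} (hm : m = m') (hn : n = n')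
    (A : Matrix (Fin m × Fin m) (Fin n × Fin n) ℂ) :
    Matrix (Fin m' × Fin m') (Fin n' × Fin n') ℂ := hm ▸ hn ▸ A

/-- Partial products M_{n-1} ⋯ M₁ · M₀ of the link matrices along a closed path. -/
def pathProd {K : ℕ} (d : ZMod K → ℕ)
    (M : ∀ i : ZMod K,
      Matrix (Fin (d (i + 1)) × Fin (d (i + 1))) (Fin (d i) × Fin (d i)) ℂ) :
    (n : ℕ) → Matrix (Fin (d (n : ZMod K)) × Fin (d (n : ZMod K)))
      (Fin (d (0 : ZMod K)) × Fin (d (0 : ZMod K))) ℂ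
  | 0 => mcast (congrArg d (Nat.cast_zero (R := ZMod K)).symm) rfl 1
  | n + 1 => mcast (congrArg d (Nat.cast_add_one (R := ZMod K) n).symm) rfl
      (M (n : ZMod K) * pathProd d M n)

/-- The path operator P = M_{K-1} ⋯ M₁ · M₀, a square matrix of size d(0)². -/
def pathOp {K : ℕ} (d : ZMod K → ℕ)
    (M : ∀ i : ZMod K,
      Matrix (Fin (d (i + 1)) × Fin (d (i + 1))) (Fin (d i) × Fin (d i)) ℂ) :
    Matrix (Fin (d (0 : ZMod K)) × Fin (d (0 : ZMod K)))
      (Fin (d (0 : ZMod K)) × Fin (d (0 : ZMod K))) ℂ :=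
  mcast (congrArg d (ZMod.natCast_self K)) rfl (pathProd d M K)

/- aux -/
lemma key_lemma {a b : ℕ} (A : Matrix (Fin a) (Fin a) ℂ) (B : Matrix (Fin b) (Fin b) ℂ)
    (ρ : Matrix (Fin a × Fin b) (Fin a × Fin b) ℂ) :
    realign (PT1 ((A ⊗ₖ B) * ρ * (A ⊗ₖ B)ᴴ)) =
      (A ⊗ₖ A.map (starRingEnd ℂ)) * realign (PT1 ρ) * (B ⊗ₖ B.map (starRingEnd ℂ))ᴴ := by
  ext ⟨i, j⟩ ⟨α, β⟩
  simp only [realign, PT1, mul_apply, kroneckerMap_apply, conjTranspose_apply, map_apply,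
    Fintype.sum_prod_type, Finset.sum_mul, Finset.mul_sum, starRingEnd_apply, star_mul',
    star_star, ← Fintype.sum_prod_type]
  rw [← Fintype.sum_prod_type', ← Fintype.sum_prod_type']
  exact Fintype.sum_equiv
    (⟨fun p => ((p.1.2, p.2.2), (p.2.1, p.1.1)), fun q => ((q.2.2, q.1.1), (q.2.1, q.1.2)),
      fun p => rfl, fun q => rfl⟩ :
      ((Fin a × Fin b) × (Fin a × Fin b)) ≃ ((Fin b × Fin b) × (Fin a × Fin a)))
    _ _ (fun ⟨⟨l, dd⟩, ⟨k, g⟩⟩ => by simp only [Equiv.coe_fn_mk]; ring)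

lemma kron_conjT {a b : ℕ} (A : Matrix (Fin a) (Fin a) ℂ) (B : Matrix (Fin b) (Fin b) ℂ) :
    (A ⊗ₖ B)ᴴ = Aᴴ ⊗ₖ Bᴴ := by
  ext ⟨p1, p2⟩ ⟨q1, q2⟩
  simp [conjTranspose_apply, kroneckerMap_apply, star_mul', mul_comm]

lemma mcast_mul {m m' k l : ℕ} (hm : m = m')
    (A : Matrix (Fin m × Fin m) (Fin k × Fin k) ℂ)
    (B : Matrix (Fin k × Fin k) (Fin l × Fin l) ℂ) :
    mcast hm rfl (A * B) = mcast hm rfl A * B := by subst hm; rfl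

lemma mcast_mcast_mul {m m' k : ℕ} (hm : m = m')
    (C : Matrix (Fin m × Fin m) (Fin m × Fin m) ℂ)
    (A : Matrix (Fin m × Fin m) (Fin k × Fin k) ℂ) :
    mcast hm hm C * mcast hm rfl A = mcast hm rfl (C * A) := by subst hm; rfl

lemma W_cast {K : ℕ} (d : ZMod K → ℕ)
    (W : ∀ i : ZMod K, Matrix (Fin (d i) × Fin (d i)) (Fin (d i) × Fin (d i)) ℂ)
    {i j : ZMod K} (e : i = j) :
    W j = mcast (congrArg d e) (congrArg d e) (W i) := by subst e; rfl

/-- Conjugation by a matrix with `W * Wᴴ = 1` and `Wᴴ * W = 1` preserves charpoly. -/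
lemma charpoly_conj {ι : Type*} [Fintype ι] [DecidableEq ι]
    (W P : Matrix ι ι ℂ) (h1 : W * Wᴴ = 1) :
    (W * P * Wᴴ).charpoly = P.charpoly := by
  classical
  have hmap : (W.map (Polynomial.C : ℂ →+* Polynomial ℂ)) *
      (Wᴴ.map (Polynomial.C : ℂ →+* Polynomial ℂ)) = 1 := by
    rw [← Matrix.map_mul, h1]
    simp
  have hch : charmatrix (W * P * Wᴴ) =
      (W.map (Polynomial.C : ℂ →+* Polynomial ℂ)) * charmatrix P *
        (Wᴴ.map (Polynomial.C : ℂ →+* Polynomial ℂ)) := by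
    rw [charmatrix, charmatrix]
    rw [Matrix.mul_sub, Matrix.sub_mul]
    congr 1
    · have hc := (Matrix.scalar_commute (n := ι) Polynomial.X
        (fun r => Commute.all Polynomial.X r)
        (W.map (Polynomial.C : ℂ →+* Polynomial ℂ))).eq
      rw [← hc, Matrix.mul_assoc, hmap, Matrix.mul_one]
    · simp only [RingHom.mapMatrix_apply]
      rw [Matrix.map_mul, Matrix.map_mul, Matrix.mul_assoc]
  rw [Matrix.charpoly, Matrix.charpoly, hch, det_mul, det_mul]
  have : ((W.map (Polynomial.C : ℂ →+* Polynomial ℂ)).det *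
      ((Wᴴ.map (Polynomial.C : ℂ →+* Polynomial ℂ)).det)) = 1 := by
    rw [← det_mul, hmap, det_one]
  calc (W.map (Polynomial.C : ℂ →+* Polynomial ℂ)).det * (charmatrix P).det *
        (Wᴴ.map (Polynomial.C : ℂ →+* Polynomial ℂ)).det
      = (charmatrix P).det * ((W.map (Polynomial.C : ℂ →+* Polynomial ℂ)).det *
          (Wᴴ.map (Polynomial.C : ℂ →+* Polynomial ℂ)).det) := by ring
    _ = (charmatrix P).det := by rw [this, mul_one]

/-- the characteristic polynomial (hence trace and eigenvalues) of the
path operator is a local unitary invariant. -/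
theorem stmt6 {K : ℕ} (hK : 2 ≤ K) (d : ZMod K → ℕ)
    (ρ : ∀ i : ZMod K,
      Matrix (Fin (d (i + 1)) × Fin (d i)) (Fin (d (i + 1)) × Fin (d i)) ℂ)
    (V : ∀ i : ZMod K, Matrix (Fin (d i)) (Fin (d i)) ℂ)
    (hV : ∀ i, V i ∈ Matrix.unitaryGroup (Fin (d i)) ℂ) :
    (pathOp d (fun i => realign (PT1 (ρ i)))).charpoly =
      (pathOp d (fun i => realign (PT1
        ((V (i + 1) ⊗ₖ V i) * ρ i * (V (i + 1) ⊗ₖ V i)ᴴ)))).charpoly ∧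
    (pathOp d (fun i => realign (PT1 (ρ i)))).trace =
      (pathOp d (fun i => realign (PT1
        ((V (i + 1) ⊗ₖ V i) * ρ i * (V (i + 1) ⊗ₖ V i)ᴴ)))).trace := by
  classical
  -- the local conjugators on doubled spaces
  set W : ∀ i : ZMod K, Matrix (Fin (d i) × Fin (d i)) (Fin (d i) × Fin (d i)) ℂ :=
    fun i => (V i) ⊗ₖ (V i).map (starRingEnd ℂ) with hW
  -- unitarity of W
  have hWu : ∀ i : ZMod K, W i * (W i)ᴴ = 1 := by
    intro i
    have h1 : V i * (V i)ᴴ = 1 := (Matrix.mem_unitaryGroup_iff.mp (hV i))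
    have h2 : (V i).map (starRingEnd ℂ) * ((V i).map (starRingEnd ℂ))ᴴ = 1 := by
      have : ((V i).map (starRingEnd ℂ))ᴴ = (V i)ᵀ := by
        ext p q; simp [conjTranspose_apply, map_apply, transpose_apply]
      rw [this]
      have : (V i).map (starRingEnd ℂ) * (V i)ᵀ = (V i * (V i)ᴴ).map (starRingEnd ℂ) := by
        rw [Matrix.map_mul]
        congr 1
        ext p q; simp [conjTranspose_apply, map_apply, transpose_apply]
      rw [this, h1]
      ext p q
      simp [Matrix.one_apply, apply_ite]
    show (V i ⊗ₖ (V i).map (starRingEnd ℂ)) * (V i ⊗ₖ (V i).map (starRingEnd ℂ))ᴴ = 1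
    rw [kron_conjT, ← mul_kronecker_mul, h1, h2, one_kronecker_one]
  have hWu' : ∀ i : ZMod K, (W i)ᴴ * W i = 1 := by
    intro i
    have := hWu i
    exact mul_eq_one_comm.mp this
  -- transformed link matrices
  set M : ∀ i : ZMod K,
      Matrix (Fin (d (i + 1)) × Fin (d (i + 1))) (Fin (d i) × Fin (d i)) ℂ :=
    fun i => realign (PT1 (ρ i)) with hM
  have hlink : ∀ i : ZMod K,
      realign (PT1 ((V (i + 1) ⊗ₖ V i) * ρ i * (V (i + 1) ⊗ₖ V i)ᴴ)) =
        W (i + 1) * M i * (W i)ᴴ := by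
    intro i
    rw [key_lemma]
  -- induction on partial products
  have hind : ∀ n : ℕ,
      pathProd d (fun i => realign (PT1
          ((V (i + 1) ⊗ₖ V i) * ρ i * (V (i + 1) ⊗ₖ V i)ᴴ))) n =
        W (n : ZMod K) * pathProd d M n * (W (0 : ZMod K))ᴴ := by
    intro n
    induction n with
    | zero =>
      show mcast (congrArg d (Nat.cast_zero (R := ZMod K)).symm) rfl 1 =
        W ((0 : ℕ) : ZMod K) * mcast (congrArg d (Nat.cast_zero (R := ZMod K)).symm) rfl 1 *
          (W (0 : ZMod K))ᴴ
      rw [W_cast d W (Nat.cast_zero (R := ZMod K)).symm, mcast_mcast_mul, mul_one,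
        ← mcast_mul, hWu]
    | succ n ih =>
      show mcast (congrArg d (Nat.cast_add_one (R := ZMod K) n).symm) rfl
          (realign (PT1 ((V ((n : ZMod K) + 1) ⊗ₖ V (n : ZMod K)) * ρ (n : ZMod K) *
            (V ((n : ZMod K) + 1) ⊗ₖ V (n : ZMod K))ᴴ)) *
           pathProd d (fun i => realign (PT1
            ((V (i + 1) ⊗ₖ V i) * ρ i * (V (i + 1) ⊗ₖ V i)ᴴ))) n) =
        W ((n + 1 : ℕ) : ZMod K) *
          mcast (congrArg d (Nat.cast_add_one (R := ZMod K) n).symm) rfl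
            (M (n : ZMod K) * pathProd d M n) * (W (0 : ZMod K))ᴴ
      rw [hlink, ih]
      have hassoc : W ((n : ZMod K) + 1) * M (n : ZMod K) * (W (n : ZMod K))ᴴ *
          (W (n : ZMod K) * pathProd d M n * (W (0 : ZMod K))ᴴ) =
          W ((n : ZMod K) + 1) * (M (n : ZMod K) * pathProd d M n) * (W (0 : ZMod K))ᴴ := by
        rw [Matrix.mul_assoc (W ((n : ZMod K) + 1) * M (n : ZMod K)), ← Matrix.mul_assoc
          ((W (n : ZMod K))ᴴ), ← Matrix.mul_assoc ((W (n : ZMod K))ᴴ), hWu', Matrix.one_mul,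
          ← Matrix.mul_assoc, ← Matrix.mul_assoc, Matrix.mul_assoc (W ((n : ZMod K) + 1))]
      rw [hassoc, mcast_mul, ← mcast_mcast_mul,
        ← W_cast d W (Nat.cast_add_one (R := ZMod K) n).symm]
  -- conclusion for the path operator
  have hP : pathOp d (fun i => realign (PT1
        ((V (i + 1) ⊗ₖ V i) * ρ i * (V (i + 1) ⊗ₖ V i)ᴴ))) =
      W (0 : ZMod K) * pathOp d M * (W (0 : ZMod K))ᴴ := by
    unfold pathOp
    rw [hind K, mcast_mul, ← mcast_mcast_mul, ← W_cast d W (ZMod.natCast_self K)]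
  constructor
  · rw [hP, charpoly_conj _ _ (hWu 0)]
  · rw [hP, Matrix.trace_mul_cycle, hWu', Matrix.one_mul]
end
end

section
/- Let d₁, d₂ be natural numbers, let ρ₂₁ be any matrix on ℂ^{d₂} ⊗ ℂ^{d₁}, let V₁ be a unitary d₁ × d₁ complex matrix and V₂ a unitary d₂ × d₂ complex matrix, and set ρ̃₂₁ = (V₂ ⊗ V₁) · ρ₂₁ · (V₂ ⊗ V₁)†. Then the realignment without partial transpose satisfies R(ρ₂₁) = (V₂ ⊗ V₂*)† · R(ρ̃₂₁) · (V₁* ⊗ V₁), where V* denotes the entrywise complex conjugate. -/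
open Matrix Kronecker

noncomputable section

lemma kron_conjT_s7 {m n : Type*} [Fintype m] [Fintype n]
    (A : Matrix m m ℂ) (B : Matrix n n ℂ) : (A ⊗ₖ B)ᴴ = Aᴴ ⊗ₖ Bᴴ := by
  ext ⟨i, j⟩ ⟨k, l⟩
  simp [conjTranspose_apply, kroneckerMap_apply, mul_comm]

lemma realign_mul {d₂ d₁ : ℕ} (A C : Matrix (Fin d₂) (Fin d₂) ℂ)
    (B D : Matrix (Fin d₁) (Fin d₁) ℂ)
    (ρ : Matrix (Fin d₂ × Fin d₁) (Fin d₂ × Fin d₁) ℂ) :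
    realign ((A ⊗ₖ B) * ρ * (C ⊗ₖ D)) = (A ⊗ₖ Cᵀ) * realign ρ * (Bᵀ ⊗ₖ D) := by
  ext ⟨i, j⟩ ⟨α, β⟩
  simp only [realign, Matrix.mul_apply, kroneckerMap_apply, Fintype.sum_prod_type,
    Finset.sum_mul, Finset.mul_sum, transpose_apply]
  conv_lhs => enter [2, l, 2, δ]; rw [Finset.sum_comm]
  conv_lhs => enter [2, l]; rw [Finset.sum_comm]
  conv_lhs => rw [Finset.sum_comm]
  refine Finset.sum_congr rfl fun γ _ => ?_
  conv_lhs => rw [Finset.sum_comm]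
  refine Finset.sum_congr rfl fun δ _ => ?_
  conv_lhs => rw [Finset.sum_comm]
  refine Finset.sum_congr rfl fun k _ => ?_
  refine Finset.sum_congr rfl fun l _ => ?_
  ring

/-- transformation law of plain realignment (no partial transpose)
under local unitaries: R(ρ₂₁) = (V₂ ⊗ V₂*)† · R(ρ̃₂₁) · (V₁* ⊗ V₁). -/
theorem stmt7 {d₁ d₂ : ℕ}
    (ρ₂₁ : Matrix (Fin d₂ × Fin d₁) (Fin d₂ × Fin d₁) ℂ)
    (V₁ : Matrix (Fin d₁) (Fin d₁) ℂ) (V₂ : Matrix (Fin d₂) (Fin d₂) ℂ)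
    (hV₁ : V₁ ∈ Matrix.unitaryGroup (Fin d₁) ℂ)
    (hV₂ : V₂ ∈ Matrix.unitaryGroup (Fin d₂) ℂ) :
    realign ρ₂₁ =
      (V₂ ⊗ₖ V₂.map star)ᴴ *
        realign ((V₂ ⊗ₖ V₁) * ρ₂₁ * (V₂ ⊗ₖ V₁)ᴴ) *
        (V₁.map star ⊗ₖ V₁) := by
  have h1 : V₁ᴴ * V₁ = 1 := (Matrix.mem_unitaryGroup_iff').mp hV₁
  have h2 : V₂ᴴ * V₂ = 1 := (Matrix.mem_unitaryGroup_iff').mp hV₂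
  have h2' : V₂ * V₂ᴴ = 1 := (Matrix.mem_unitaryGroup_iff).mp hV₂
  rw [kron_conjT_s7 V₂ V₁, realign_mul, kron_conjT_s7]
  have hmap2 : (V₂.map star)ᴴ = V₂ᵀ := by ext i j; simp [conjTranspose_apply]
  rw [hmap2]
  have hm1 : V₁.map star = V₁ᴴᵀ := by
    ext i j; simp [conjTranspose_apply]
  have e1 : V₁ᵀ * V₁.map star = 1 := by
    rw [hm1, ← Matrix.transpose_mul, h1, Matrix.transpose_one]
  have e2 : V₂ᵀ * V₂ᴴᵀ = 1 := by
    rw [← Matrix.transpose_mul, h2, Matrix.transpose_one]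
  have k1 : (V₁ᵀ ⊗ₖ V₁ᴴ) * (V₁.map star ⊗ₖ V₁) = 1 := by
    rw [← mul_kronecker_mul, e1, h1, one_kronecker_one]
  have k2 : (V₂ᴴ ⊗ₖ V₂ᵀ) * (V₂ ⊗ₖ V₂ᴴᵀ) = 1 := by
    rw [← mul_kronecker_mul, h2, e2, one_kronecker_one]
  rw [Matrix.mul_assoc (V₂ᴴ ⊗ₖ V₂ᵀ), Matrix.mul_assoc _ (V₁ᵀ ⊗ₖ V₁ᴴ), k1,
    Matrix.mul_one, ← Matrix.mul_assoc (V₂ᴴ ⊗ₖ V₂ᵀ), k2, Matrix.one_mul]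
end
end
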